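/- Let I_A be the excenter of triangle ABC opposite vertex A, with exradius r_a, and let G be the centroid, K = diag(S_A, S_B, S_C). Then I_A K I_Aᵀ = 2r_a² and 3 G K I_Aᵀ = −2R r_a + 2r_a². -/

import Mathlib

open scoped RealInnerProductSpace

noncomputable section

abbrev Pt := EuclideanSpace ℝ (Fin 2)

/-- Signed area of triangle XYZ in the plane. -/
def sArea (X Y Z : Pt) : ℝ :=
  ((Y 0 - X 0) * (Z 1 - X 1) - (Z 0 - X 0) * (Y 1 - X 1)) / 2

/-- Conway symbol: `conwayA A B C = S_A = (b^2 + c^2 - a^2)/2`. -/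
def conwayA (X Y Z : Pt) : ℝ :=
  (dist Z X ^ 2 + dist X Y ^ 2 - dist Y Z ^ 2) / 2

/-- The bilinear form given by the metric matrix K = diag (S_A, S_B, S_C). -/
def Kf (A B C : Pt) (u v : Fin 3 → ℝ) : ℝ :=
  conwayA A B C * u 0 * v 0 + conwayA B C A * u 1 * v 1 + conwayA C A B * u 2 * v 2

/-- The point with (normalized) barycentric coordinates `u` w.r.t. A, B, C. -/
def bary (A B C : Pt) (u : Fin 3 → ℝ) : Pt :=
  u 0 • A + u 1 • B + u 2 • C

theorem stmt15 (A B C : Pt) (h : sArea A B C ≠ 0)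
    (a b c S p ra R : ℝ) (ha : a = dist B C) (hb : b = dist C A) (hc : c = dist A B)
    (hS : S = |sArea A B C|) (hp : p = (a + b + c) / 2) (hra : ra = S / (p - a))
    (hR : R = a * b * c / (4 * S))
    (Ia : Fin 3 → ℝ)
    (hIa : Ia = ![-a / (2 * (p - a)), b / (2 * (p - a)), c / (2 * (p - a))]) :
    Kf A B C Ia Ia = 2 * ra ^ 2 ∧
      Kf A B C ![1, 1, 1] Ia = -2 * R * ra + 2 * ra ^ 2 := by
  have hd2 : ∀ X Y : Pt, dist X Y ^ 2 = (X 0 - Y 0) ^ 2 + (X 1 - Y 1) ^ 2 := fun X Y => by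
    rw [EuclideanSpace.dist_eq, Real.sq_sqrt (by positivity)]
    simp [Fin.sum_univ_two, Real.dist_eq, sq_abs]
  have ha2 : a ^ 2 = (B 0 - C 0) ^ 2 + (B 1 - C 1) ^ 2 := by rw [ha, hd2]
  have hb2 : b ^ 2 = (C 0 - A 0) ^ 2 + (C 1 - A 1) ^ 2 := by rw [hb, hd2]
  have hc2 : c ^ 2 = (A 0 - B 0) ^ 2 + (A 1 - B 1) ^ 2 := by rw [hc, hd2]
  have hS2 : S ^ 2 = sArea A B C ^ 2 := by rw [hS, sq_abs]
  have key : 16 * S ^ 2 = (a + b + c) * (b + c - a) * (a + c - b) * (a + b - c) := by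
    have e : 16 * S ^ 2 =
        2 * a ^ 2 * b ^ 2 + 2 * b ^ 2 * c ^ 2 + 2 * c ^ 2 * a ^ 2
          - (a ^ 2) ^ 2 - (b ^ 2) ^ 2 - (c ^ 2) ^ 2 := by
      rw [hS2, ha2, hb2, hc2]; unfold sArea; ring
    linear_combination e
  have hS0 : S ≠ 0 := by rw [hS]; exact abs_ne_zero.mpr h
  have hpa : p - a ≠ 0 := by
    intro h0
    have hba : b + c - a = 0 := by rw [hp] at h0; linarith
    apply hS0
    have : 16 * S ^ 2 = 0 := by rw [key, hba]; ring
    have : S ^ 2 = 0 := by linarith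
    exact pow_eq_zero_iff (by norm_num) |>.mp this
  have SA : conwayA A B C = (b ^ 2 + c ^ 2 - a ^ 2) / 2 := by
    unfold conwayA; rw [← ha, ← hb, ← hc]
  have SB : conwayA B C A = (c ^ 2 + a ^ 2 - b ^ 2) / 2 := by
    unfold conwayA; rw [← ha, ← hb, ← hc]
  have SC : conwayA C A B = (a ^ 2 + b ^ 2 - c ^ 2) / 2 := by
    unfold conwayA; rw [← ha, ← hb, ← hc]
  subst hIa hra hR
  constructor
  · unfold Kf
    rw [SA, SB, SC]
    simp only [Matrix.cons_val_zero, Matrix.cons_val_one, Matrix.head_cons,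
      Matrix.cons_val_two, Matrix.tail_cons]
    field_simp
    linear_combination (-1) * key
  · unfold Kf
    rw [SA, SB, SC]
    simp only [Matrix.cons_val_zero, Matrix.cons_val_one, Matrix.head_cons,
      Matrix.cons_val_two, Matrix.tail_cons]
    field_simp
    linear_combination (-2) * key + (4 * (-(a * (b ^ 2 + c ^ 2 - a ^ 2)) + b * (c ^ 2 + a ^ 2 - b ^ 2) + c * (a ^ 2 + b ^ 2 - c ^ 2)) + 8 * a * b * c) * hp
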